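/- Let E be a finite-dimensional real inner product space and let A : ℝ → End(E) be a continuous map with sup_{t∈ℝ} ‖A(t)‖ < ∞, such that A(t) converges as t → −∞ and as t → +∞ to operators A₋ and A₊ respectively, each of which is self-adjoint and invertible. Then every bounded continuously differentiable function f : ℝ → E satisfying f'(t) + A(t)f(t) = 0 for all t decays exponentially: there exist constants C, δ > 0 such that ‖f(t)‖ ≤ C·e^(−δ|t|) for all t ∈ ℝ. -/

import Mathlib

set_option maxHeartbeats 2000000

open scoped RealInnerProductSpace
open Real Filter Finset

lemma aux_cs {ι : Type*} (s : Finset ι) (a r : ι → ℝ) :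
    |∑ i ∈ s, a i * r i| ≤ Real.sqrt (∑ i ∈ s, (a i)^2) * Real.sqrt (∑ i ∈ s, (r i)^2) := by
  have h := sum_mul_sq_le_sq_mul_sq s a r
  have h2 : Real.sqrt ((∑ i ∈ s, a i * r i)^2) ≤
      Real.sqrt ((∑ i ∈ s, (a i)^2) * ∑ i ∈ s, (r i)^2) := Real.sqrt_le_sqrt h
  rwa [Real.sqrt_sq_eq_abs, Real.sqrt_mul (by positivity)] at h2

lemma aux_estp {n : ℕ} (S : Finset (Fin n)) (μ cc ρ : Fin n → ℝ) (m nw P PQ : ℝ)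
    (hμS : ∀ i ∈ S, m ≤ μ i)
    (hP : P = ∑ i ∈ S, (cc i)^2)
    (hcross : |∑ i ∈ S, cc i * ρ i| ≤ Real.sqrt P * nw)
    (hw : nw ≤ m/4 * Real.sqrt PQ) :
    ∑ i ∈ S, 2 * cc i * (-(μ i * cc i) - ρ i) ≤
      -(2*m) * P + (m/2) * Real.sqrt P * Real.sqrt PQ := by
  have h1 : ∑ i ∈ S, 2 * cc i * (-(μ i * cc i) - ρ i)
      = (∑ i ∈ S, -(2 * μ i * (cc i)^2)) - 2 * ∑ i ∈ S, cc i * ρ i := by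
    rw [Finset.mul_sum, ← Finset.sum_sub_distrib]
    exact Finset.sum_congr rfl fun i _ => by ring
  have h2 : (∑ i ∈ S, -(2 * μ i * (cc i)^2)) ≤ -(2*m) * P := by
    rw [hP, Finset.mul_sum]
    apply Finset.sum_le_sum
    intro i hi
    nlinarith [hμS i hi, sq_nonneg (cc i)]
  have h3 : -(2 * ∑ i ∈ S, cc i * ρ i) ≤ 2 * (Real.sqrt P * nw) := by
    have := (abs_le.mp hcross).1
    linarith
  have h4 : Real.sqrt P * nw ≤ Real.sqrt P * (m/4 * Real.sqrt PQ) :=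
    mul_le_mul_of_nonneg_left hw (Real.sqrt_nonneg _)
  nlinarith [Real.sqrt_nonneg P, Real.sqrt_nonneg PQ]

lemma aux_estq {n : ℕ} (S : Finset (Fin n)) (μ cc ρ : Fin n → ℝ) (m nw Q PQ : ℝ)
    (hμS : ∀ i ∈ S, μ i ≤ -m)
    (hQ : Q = ∑ i ∈ S, (cc i)^2)
    (hcross : |∑ i ∈ S, cc i * ρ i| ≤ Real.sqrt Q * nw)
    (hw : nw ≤ m/4 * Real.sqrt PQ) :
    2*m * Q - (m/2) * Real.sqrt Q * Real.sqrt PQ ≤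
      ∑ i ∈ S, 2 * cc i * (-(μ i * cc i) - ρ i) := by
  have h1 : ∑ i ∈ S, 2 * cc i * (-(μ i * cc i) - ρ i)
      = (∑ i ∈ S, -(2 * μ i * (cc i)^2)) - 2 * ∑ i ∈ S, cc i * ρ i := by
    rw [Finset.mul_sum, ← Finset.sum_sub_distrib]
    exact Finset.sum_congr rfl fun i _ => by ring
  have h2 : 2*m * Q ≤ (∑ i ∈ S, -(2 * μ i * (cc i)^2)) := by
    rw [hQ, Finset.mul_sum]
    apply Finset.sum_le_sum
    intro i hi
    nlinarith [hμS i hi, sq_nonneg (cc i)]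
  have h3 : 2 * ∑ i ∈ S, cc i * ρ i ≤ 2 * (Real.sqrt Q * nw) := by
    have := (abs_le.mp hcross).2
    linarith
  have h4 : Real.sqrt Q * nw ≤ Real.sqrt Q * (m/4 * Real.sqrt PQ) :=
    mul_le_mul_of_nonneg_left hw (Real.sqrt_nonneg _)
  nlinarith [Real.sqrt_nonneg Q, Real.sqrt_nonneg PQ]

lemma aux_expderiv (m t : ℝ) :
    HasDerivAt (fun s => Real.exp (m * s)) (m * Real.exp (m * t)) t := by
  simpa [mul_comm] using ((hasDerivAt_id t).const_mul m).exp

lemma aux_mono (u ud : ℝ → ℝ) (hu : ∀ t, HasDerivAt u (ud t) t) (m T : ℝ)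
    (hineq : ∀ t, T ≤ t → m * u t ≤ ud t) :
    MonotoneOn (fun t => u t * Real.exp (-m * t)) (Set.Ici T) := by
  have hh : ∀ t, HasDerivAt (fun s => u s * Real.exp (-m * s))
      (ud t * Real.exp (-m * t) + u t * (-m * Real.exp (-m * t))) t :=
    fun t => (hu t).mul (aux_expderiv (-m) t)
  apply monotoneOn_of_deriv_nonneg (convex_Ici T)
  · exact (Differentiable.continuous fun x => (hh x).differentiableAt).continuousOn
  · intro x _
    exact (hh x).differentiableAt.differentiableWithinAt
  · intro x hx
    rw [interior_Ici] at hx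
    rw [(hh x).deriv]
    have h1 := hineq x (le_of_lt hx)
    nlinarith [Real.exp_pos (-m * x), mul_le_mul_of_nonneg_right h1 (Real.exp_pos (-m*x)).le]

lemma aux_anti (u ud : ℝ → ℝ) (hu : ∀ t, HasDerivAt u (ud t) t) (m T : ℝ)
    (hineq : ∀ t, T ≤ t → ud t ≤ -m * u t) :
    AntitoneOn (fun t => u t * Real.exp (m * t)) (Set.Ici T) := by
  have hh : ∀ t, HasDerivAt (fun s => u s * Real.exp (m * s))
      (ud t * Real.exp (m * t) + u t * (m * Real.exp (m * t))) t :=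
    fun t => (hu t).mul (aux_expderiv m t)
  apply antitoneOn_of_deriv_nonpos (convex_Ici T)
  · exact (Differentiable.continuous fun x => (hh x).differentiableAt).continuousOn
  · intro x _
    exact (hh x).differentiableAt.differentiableWithinAt
  · intro x hx
    rw [interior_Ici] at hx
    rw [(hh x).deriv]
    have h1 := hineq x (le_of_lt hx)
    nlinarith [Real.exp_pos (m * x), mul_le_mul_of_nonneg_right h1 (Real.exp_pos (m*x)).le]

lemma aux_nonpos (u : ℝ → ℝ) (m T K2 : ℝ) (hm : 0 < m) (hbdd : ∀ t : ℝ, u t ≤ K2)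
    (hmono : MonotoneOn (fun t => u t * Real.exp (-m * t)) (Set.Ici T)) :
    ∀ t : ℝ, T ≤ t → u t ≤ 0 := by
  by_contra hcon
  push_neg at hcon
  obtain ⟨t₀, ht₀, hpos⟩ := hcon
  set X := max 0 (K2 / u t₀) with hX
  set s := t₀ + (X + 1)/m with hs
  have hX0 : 0 ≤ X := le_max_left _ _
  have hst : t₀ ≤ s := by
    rw [hs]
    have : 0 ≤ (X + 1)/m := by positivity
    linarith
  have h2 : u t₀ * Real.exp (-m * t₀) ≤ u s * Real.exp (-m * s) :=
    hmono (Set.mem_Ici.2 ht₀) (Set.mem_Ici.2 (le_trans ht₀ hst)) hst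
  have h3 : u t₀ * Real.exp (m * (s - t₀)) ≤ u s := by
    have h := mul_le_mul_of_nonneg_right h2 (Real.exp_pos (m*s)).le
    rw [mul_assoc, mul_assoc, ← Real.exp_add, ← Real.exp_add] at h
    have e1 : -m * t₀ + m * s = m * (s - t₀) := by ring
    have e2 : -m * s + m * s = 0 := by ring
    rwa [e1, e2, Real.exp_zero, mul_one] at h
  have h4 : m * (s - t₀) = X + 1 := by
    rw [hs]
    field_simp
    ring
  have h5 : X + 2 ≤ Real.exp (X + 1) := by
    have := Real.add_one_le_exp (X + 1); linarith
  have h6 : K2 ≤ X * u t₀ := by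
    have := (div_le_iff₀ hpos).mp (le_max_right 0 (K2 / u t₀))
    linarith [this]
  have h7 : K2 < u t₀ * Real.exp (X + 1) := by
    nlinarith
  rw [← h4] at h7
  linarith [hbdd s, h3]

lemma aux_decay (u : ℝ → ℝ) (m T : ℝ)
    (hanti : AntitoneOn (fun t => u t * Real.exp (m * t)) (Set.Ici T)) :
    ∀ t : ℝ, T ≤ t → u t ≤ u T * Real.exp (m * T) * Real.exp (-m * t) := by
  intro t ht
  have h2 : u t * Real.exp (m * t) ≤ u T * Real.exp (m * T) :=
    hanti (Set.self_mem_Ici) (Set.mem_Ici.2 ht) ht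
  have h := mul_le_mul_of_nonneg_right h2 (Real.exp_pos (-m*t)).le
  rw [mul_assoc, mul_assoc, ← Real.exp_add] at h
  have e2 : m * t + -m * t = 0 := by ring
  rw [e2, Real.exp_zero, mul_one] at h
  linarith [h]

lemma halfline {E : Type*} [NormedAddCommGroup E] [InnerProductSpace ℝ E]
    [FiniteDimensional ℝ E]
    (A : ℝ → E →L[ℝ] E) (B : E →L[ℝ] E)
    (hB : Filter.Tendsto A Filter.atTop (nhds B))
    (hsa : ∀ x y : E, ⟪B x, y⟫ = ⟪x, B y⟫)
    (hinv : Function.Bijective B)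
    (f : ℝ → E) (hf : ∀ t : ℝ, HasDerivAt f (-(A t (f t))) t)
    (K : ℝ) (hK : ∀ t : ℝ, ‖f t‖ ≤ K) :
    ∃ C δ : ℝ, 0 < C ∧ 0 < δ ∧ ∀ t : ℝ, 0 ≤ t → ‖f t‖ ≤ C * Real.exp (-δ * t) := by
  rcases subsingleton_or_nontrivial E with hE | hE
  · refine ⟨1, 1, one_pos, one_pos, fun t _ => ?_⟩
    have : f t = 0 := Subsingleton.elim _ _
    rw [this, norm_zero]
    positivity
  -- spectral data
  have hn : Module.finrank ℝ E = Module.finrank ℝ E := rfl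
  set n := Module.finrank ℝ E with hndef
  have hnpos : 0 < n := Module.finrank_pos
  have hne : Nonempty (Fin n) := ⟨⟨0, hnpos⟩⟩
  have hsym : (B : E →ₗ[ℝ] E).IsSymmetric := fun x y => hsa x y
  set e := hsym.eigenvectorBasis hn with hedef
  set μ := hsym.eigenvalues hn with hμdef
  have heig : ∀ i, B (e i) = μ i • e i := fun i => hsym.apply_eigenvectorBasis hn i
  have hμ0 : ∀ i, μ i ≠ 0 := by
    intro i hzero
    have h1 : B (e i) = B 0 := by rw [heig i, hzero, zero_smul, map_zero]
    have h2 : e i = 0 := hinv.1 h1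
    have h3 : ‖e i‖ = 1 := e.orthonormal.1 i
    rw [h2, norm_zero] at h3; exact zero_ne_one h3
  -- minimal absolute eigenvalue
  set m := Finset.univ.inf' (univ_nonempty) (fun i => |μ i|) with hmdef
  have hμm : ∀ i, m ≤ |μ i| := fun i => Finset.inf'_le _ (Finset.mem_univ i)
  have hm : 0 < m := by
    obtain ⟨i, _, hi⟩ := Finset.exists_mem_eq_inf' (univ_nonempty) (fun i => |μ i|)
    rw [hmdef, hi]; exact abs_pos.2 (hμ0 i)
  -- coordinates
  set c : Fin n → ℝ → ℝ := fun i t => ⟪e i, f t⟫ with hcdef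
  have hpar : ∀ x : E, ∑ i, (⟪e i, x⟫ : ℝ)^2 = ‖x‖^2 := by
    intro x
    have := e.sum_inner_mul_inner x x
    rw [real_inner_self_eq_norm_sq] at this
    rw [← this]
    exact Finset.sum_congr rfl fun i _ => by rw [real_inner_comm x (e i)]; ring
  have hBcoord : ∀ (x : E) i, (⟪e i, B x⟫ : ℝ) = μ i * ⟪e i, x⟫ := by
    intro x i
    rw [← hsa (e i) x, heig i, real_inner_smul_left]
  -- derivative of coordinates
  set D : ℝ → Fin n → ℝ := fun t i => -(μ i * c i t) - ⟪e i, (A t - B) (f t)⟫ with hDdef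
  have hc : ∀ i (t : ℝ), HasDerivAt (c i) (D t i) t := by
    intro i t
    have h1 : HasDerivAt (fun s => (⟪e i, f s⟫ : ℝ)) ⟪e i, -(A t (f t))⟫ t := by
      simpa using (hasDerivAt_const t (e i)).inner ℝ (hf t)
    convert h1 using 1
    rw [hDdef]
    simp only [ContinuousLinearMap.sub_apply, inner_sub_right, inner_neg_right]
    rw [hBcoord (f t) i]
    ring
  -- positive / negative spectral parts
  set S : Finset (Fin n) := univ.filter (fun i => 0 < μ i) with hSdef
  set p : ℝ → ℝ := fun t => ∑ i ∈ S, (c i t)^2 with hpdef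
  set q : ℝ → ℝ := fun t => ∑ i ∈ Sᶜ, (c i t)^2 with hqdef
  set pd : ℝ → ℝ := fun t => ∑ i ∈ S, 2 * c i t * D t i with hpddef
  set qd : ℝ → ℝ := fun t => ∑ i ∈ Sᶜ, 2 * c i t * D t i with hqddef
  have hp0 : ∀ t, 0 ≤ p t := fun t => Finset.sum_nonneg fun i _ => sq_nonneg _
  have hq0 : ∀ t, 0 ≤ q t := fun t => Finset.sum_nonneg fun i _ => sq_nonneg _
  have hpq : ∀ t, p t + q t = ‖f t‖^2 := by
    intro t
    rw [hpdef, hqdef]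
    dsimp only
    rw [Finset.sum_add_sum_compl S fun i => (c i t)^2]
    exact hpar (f t)
  have hsum_deriv : ∀ (s : Finset (Fin n)) (t : ℝ),
      HasDerivAt (fun u => ∑ i ∈ s, (c i u)^2) (∑ i ∈ s, 2 * c i t * D t i) t := by
    intro s t
    have : ∀ i ∈ s, HasDerivAt (fun u => (c i u)^2) (2 * c i t * D t i) t := by
      intro i _
      simpa [mul_comm, mul_assoc, mul_left_comm] using (hc i t).fun_pow 2
    simpa using HasDerivAt.fun_sum this
  have hp' : ∀ t, HasDerivAt p (pd t) t := fun t => hsum_deriv S t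
  have hq' : ∀ t, HasDerivAt q (qd t) t := fun t => hsum_deriv Sᶜ t
  -- sqrt sum bound
  have hwbound : ∀ (s : Finset (Fin n)) (w : E),
      Real.sqrt (∑ i ∈ s, (⟪e i, w⟫ : ℝ)^2) ≤ ‖w‖ := by
    intro s w
    have h1 : (∑ i ∈ s, (⟪e i, w⟫ : ℝ)^2) ≤ ∑ i, (⟪e i, w⟫ : ℝ)^2 :=
      Finset.sum_le_sum_of_subset_of_nonneg (Finset.subset_univ s) (fun i _ _ => sq_nonneg _)
    calc Real.sqrt (∑ i ∈ s, (⟪e i, w⟫ : ℝ)^2)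
        ≤ Real.sqrt (‖w‖^2) := Real.sqrt_le_sqrt (le_of_le_of_eq h1 (hpar w))
      _ = ‖w‖ := Real.sqrt_sq (norm_nonneg w)
  -- choose T
  obtain ⟨T₀, hT₀⟩ := Metric.tendsto_atTop.mp hB (m/4) (by positivity)
  set T := max T₀ 0 with hTdef
  have hT0 : 0 ≤ T := le_max_right _ _
  have hTA : ∀ t, T ≤ t → ‖A t - B‖ ≤ m/4 := by
    intro t ht
    have := hT₀ t (le_trans (le_max_left _ _) ht)
    rw [dist_eq_norm] at this
    exact this.le
  -- the error vector bound
  have hw : ∀ t, T ≤ t → ‖(A t - B) (f t)‖ ≤ m/4 * Real.sqrt (p t + q t) := by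
    intro t ht
    have h1 : ‖(A t - B) (f t)‖ ≤ ‖A t - B‖ * ‖f t‖ := (A t - B).le_opNorm (f t)
    have h2 : ‖f t‖ = Real.sqrt (p t + q t) := by
      rw [hpq t, Real.sqrt_sq (norm_nonneg _)]
    rw [h2] at h1
    calc ‖(A t - B) (f t)‖ ≤ ‖A t - B‖ * Real.sqrt (p t + q t) := h1
      _ ≤ m/4 * Real.sqrt (p t + q t) :=
        mul_le_mul_of_nonneg_right (hTA t ht) (Real.sqrt_nonneg _)
  -- eigenvalue signs
  have hμS : ∀ i ∈ S, m ≤ μ i := by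
    intro i hi
    rw [hSdef, Finset.mem_filter] at hi
    have := hμm i
    rwa [abs_of_pos hi.2] at this
  have hμSc : ∀ i ∈ Sᶜ, μ i ≤ -m := by
    intro i hi
    rw [Finset.mem_compl, hSdef, Finset.mem_filter] at hi
    have hneg : μ i < 0 := by
      rcases lt_trichotomy (μ i) 0 with h | h | h
      · exact h
      · exact absurd h (hμ0 i)
      · exact absurd ⟨Finset.mem_univ i, h⟩ hi
    have := hμm i
    rw [abs_of_neg hneg] at this
    linarith
  -- cross-term estimate
  have hcross : ∀ (s : Finset (Fin n)) (t : ℝ),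
      |∑ i ∈ s, c i t * ⟪e i, (A t - B) (f t)⟫| ≤
        Real.sqrt (∑ i ∈ s, (c i t)^2) * ‖(A t - B) (f t)‖ := by
    intro s t
    calc |∑ i ∈ s, c i t * ⟪e i, (A t - B) (f t)⟫|
        ≤ Real.sqrt (∑ i ∈ s, (c i t)^2) *
          Real.sqrt (∑ i ∈ s, (⟪e i, (A t - B) (f t)⟫ : ℝ)^2) :=
          aux_cs s (fun i => c i t) (fun i => ⟪e i, (A t - B) (f t)⟫)
      _ ≤ Real.sqrt (∑ i ∈ s, (c i t)^2) * ‖(A t - B) (f t)‖ :=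
          mul_le_mul_of_nonneg_left (hwbound s _) (Real.sqrt_nonneg _)
  -- derivative estimates
  have est_p : ∀ t, T ≤ t →
      pd t ≤ -(2*m) * p t + (m/2) * Real.sqrt (p t) * Real.sqrt (p t + q t) := by
    intro t ht
    exact aux_estp S μ (fun i => c i t) (fun i => ⟪e i, (A t - B) (f t)⟫) m
      (‖(A t - B) (f t)‖) (p t) (p t + q t) hμS rfl (hcross S t) (hw t ht)
  have est_q : ∀ t, T ≤ t →
      2*m * q t - (m/2) * Real.sqrt (q t) * Real.sqrt (p t + q t) ≤ qd t := by
    intro t ht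
    exact aux_estq Sᶜ μ (fun i => c i t) (fun i => ⟪e i, (A t - B) (f t)⟫) m
      (‖(A t - B) (f t)‖) (q t) (p t + q t) hμSc rfl (hcross Sᶜ t) (hw t ht)
  -- step A : q ≤ p on [T, ∞)
  have hr' : ∀ t, T ≤ t → m * (q t - p t) ≤ qd t - pd t := by
    intro t ht
    have h1 := est_p t ht
    have h2 := est_q t ht
    have hsp : Real.sqrt (p t) ≤ Real.sqrt (p t + q t) :=
      Real.sqrt_le_sqrt (by linarith [hq0 t])
    have hsq : Real.sqrt (q t) ≤ Real.sqrt (p t + q t) :=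
      Real.sqrt_le_sqrt (by linarith [hp0 t])
    have hself : Real.sqrt (p t + q t) * Real.sqrt (p t + q t) = p t + q t :=
      Real.mul_self_sqrt (by linarith [hp0 t, hq0 t])
    have e1 : Real.sqrt (p t) * Real.sqrt (p t + q t) ≤ p t + q t := by
      calc Real.sqrt (p t) * Real.sqrt (p t + q t)
          ≤ Real.sqrt (p t + q t) * Real.sqrt (p t + q t) :=
            mul_le_mul_of_nonneg_right hsp (Real.sqrt_nonneg _)
        _ = p t + q t := hself
    have e2 : Real.sqrt (q t) * Real.sqrt (p t + q t) ≤ p t + q t := by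
      calc Real.sqrt (q t) * Real.sqrt (p t + q t)
          ≤ Real.sqrt (p t + q t) * Real.sqrt (p t + q t) :=
            mul_le_mul_of_nonneg_right hsq (Real.sqrt_nonneg _)
        _ = p t + q t := hself
    have f1 : (m/2) * (Real.sqrt (p t) * Real.sqrt (p t + q t)) ≤ (m/2) * (p t + q t) :=
      mul_le_mul_of_nonneg_left e1 (by positivity)
    have f2 : (m/2) * (Real.sqrt (q t) * Real.sqrt (p t + q t)) ≤ (m/2) * (p t + q t) :=
      mul_le_mul_of_nonneg_left e2 (by positivity)
    nlinarith [hp0 t, hq0 t]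
  have hKnn : 0 ≤ K := le_trans (norm_nonneg (f 0)) (hK 0)
  have hqple : ∀ t, T ≤ t → q t - p t ≤ 0 := by
    apply aux_nonpos (fun t => q t - p t) m T (K^2) hm
    · intro t
      have h1 := hpq t
      have h2 := hp0 t
      have h3 : ‖f t‖^2 ≤ K^2 := by nlinarith [norm_nonneg (f t), hK t]
      linarith
    · exact aux_mono (fun t => q t - p t) (fun t => qd t - pd t)
        (fun t => (hq' t).sub (hp' t)) m T hr'
  -- step B : exponential decay of p
  have hpdec : ∀ t, T ≤ t → pd t ≤ -m * p t := by
    intro t ht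
    have h1 := est_p t ht
    have hqp := hqple t ht
    have h2 : Real.sqrt (p t + q t) ≤ Real.sqrt (2 * p t) :=
      Real.sqrt_le_sqrt (by linarith)
    have h3 : Real.sqrt (p t) * Real.sqrt (p t + q t) ≤ 2 * p t := by
      calc Real.sqrt (p t) * Real.sqrt (p t + q t)
          ≤ Real.sqrt (p t) * Real.sqrt (2 * p t) :=
            mul_le_mul_of_nonneg_left h2 (Real.sqrt_nonneg _)
        _ = Real.sqrt (p t * (2 * p t)) := (Real.sqrt_mul (hp0 t) _).symm
        _ ≤ Real.sqrt ((2 * p t)^2) := Real.sqrt_le_sqrt (by nlinarith [hp0 t])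
        _ = 2 * p t := Real.sqrt_sq (by linarith [hp0 t])
    have f1 : (m/2) * (Real.sqrt (p t) * Real.sqrt (p t + q t)) ≤ (m/2) * (2 * p t) :=
      mul_le_mul_of_nonneg_left h3 (by positivity)
    nlinarith [hp0 t]
  have hdecay := aux_decay p m T (aux_anti p pd hp' m T hpdec)
  -- conclusion
  set C1 := Real.sqrt (2 * p T * Real.exp (m * T)) with hC1
  have hfinal1 : ∀ t, T ≤ t → ‖f t‖ ≤ C1 * Real.exp (-(m/2) * t) := by
    intro t ht
    have h1 : ‖f t‖^2 = p t + q t := (hpq t).symm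
    have h2 : q t ≤ p t := by linarith [hqple t ht]
    have h3 := hdecay t ht
    have h4 : ‖f t‖^2 ≤ 2 * (p T * Real.exp (m*T) * Real.exp (-m*t)) := by
      have := hp0 t
      nlinarith
    have hexp2 : Real.exp (-(m/2)*t)^2 = Real.exp (-m*t) := by
      rw [sq, ← Real.exp_add]
      congr 1
      ring
    have hPTnn : 0 ≤ 2 * p T * Real.exp (m*T) := by
      have := hp0 T
      positivity
    have h5 : (C1 * Real.exp (-(m/2) * t))^2 = 2 * (p T * Real.exp (m*T) * Real.exp (-m*t)) := by
      rw [mul_pow, hC1, Real.sq_sqrt hPTnn, hexp2]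
      ring
    have h6 : 0 ≤ C1 * Real.exp (-(m/2)*t) := by positivity
    calc ‖f t‖ = Real.sqrt (‖f t‖^2) := (Real.sqrt_sq (norm_nonneg _)).symm
      _ ≤ Real.sqrt ((C1 * Real.exp (-(m/2)*t))^2) := Real.sqrt_le_sqrt (by rw [h5]; exact h4)
      _ = C1 * Real.exp (-(m/2)*t) := Real.sqrt_sq h6
  refine ⟨max C1 (K * Real.exp ((m/2) * T)) + 1, m/2, ?_, by positivity, ?_⟩
  · have h1 : (0:ℝ) ≤ C1 := Real.sqrt_nonneg _
    have h2 : C1 ≤ max C1 (K * Real.exp ((m/2) * T)) := le_max_left _ _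
    linarith
  · intro t ht
    have hexppos := (Real.exp_pos (-(m/2) * t)).le
    rcases le_total T t with h | h
    · have := hfinal1 t h
      have hC1le : C1 ≤ max C1 (K * Real.exp ((m/2) * T)) + 1 := by
        have := le_max_left C1 (K * Real.exp ((m/2) * T)); linarith
      calc ‖f t‖ ≤ C1 * Real.exp (-(m/2) * t) := this
        _ ≤ (max C1 (K * Real.exp ((m/2) * T)) + 1) * Real.exp (-(m/2) * t) :=
          mul_le_mul_of_nonneg_right hC1le hexppos
    · have h1 : ‖f t‖ ≤ K := hK t
      have h2 : Real.exp (-(m/2)*T) ≤ Real.exp (-(m/2)*t) := by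
        apply Real.exp_le_exp.2
        nlinarith
      have h3 : K = (K * Real.exp ((m/2)*T)) * Real.exp (-(m/2)*T) := by
        rw [mul_assoc, ← Real.exp_add]
        have : (m/2)*T + -(m/2)*T = 0 := by ring
        rw [this, Real.exp_zero, mul_one]
      have h4 : K ≤ (K * Real.exp ((m/2)*T)) * Real.exp (-(m/2)*t) := by
        calc K = (K * Real.exp ((m/2)*T)) * Real.exp (-(m/2)*T) := h3
          _ ≤ (K * Real.exp ((m/2)*T)) * Real.exp (-(m/2)*t) :=
            mul_le_mul_of_nonneg_left h2 (by positivity)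
      have h5 : K * Real.exp ((m/2)*T) ≤ max C1 (K * Real.exp ((m/2) * T)) + 1 := by
        have := le_max_right C1 (K * Real.exp ((m/2) * T)); linarith
      calc ‖f t‖ ≤ K := h1
        _ ≤ (K * Real.exp ((m/2)*T)) * Real.exp (-(m/2)*t) := h4
        _ ≤ (max C1 (K * Real.exp ((m/2) * T)) + 1) * Real.exp (-(m/2)*t) :=
          mul_le_mul_of_nonneg_right h5 hexppos

/-- Let `E` be a finite-dimensional real inner product space and `A : ℝ → End(E)`
a continuous map, bounded in operator norm, converging at `-∞` and `+∞` to
self-adjoint invertible operators `A₋` and `A₊`.  Then every bounded `C¹` solution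
`f : ℝ → E` of `f' + A f = 0` decays exponentially: there exist `C, δ > 0` with
`‖f t‖ ≤ C * exp (-δ * |t|)` for all `t`. -/
theorem stmt_11 {E : Type*} [NormedAddCommGroup E] [InnerProductSpace ℝ E]
    [FiniteDimensional ℝ E]
    (A : ℝ → E →L[ℝ] E) (hA_cont : Continuous A)
    (hA_bdd : ∃ K : ℝ, ∀ t : ℝ, ‖A t‖ ≤ K)
    (Aminus Aplus : E →L[ℝ] E)
    (hA_minus : Filter.Tendsto A Filter.atBot (nhds Aminus))
    (hA_plus : Filter.Tendsto A Filter.atTop (nhds Aplus))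
    (hminus_sa : ∀ x y : E, ⟪Aminus x, y⟫ = ⟪x, Aminus y⟫)
    (hplus_sa : ∀ x y : E, ⟪Aplus x, y⟫ = ⟪x, Aplus y⟫)
    (hminus_inv : Function.Bijective Aminus)
    (hplus_inv : Function.Bijective Aplus)
    (f : ℝ → E)
    (hf_sol : ∀ t : ℝ, HasDerivAt f (-(A t (f t))) t)
    (hf_bdd : ∃ K : ℝ, ∀ t : ℝ, ‖f t‖ ≤ K) :
    ∃ C δ : ℝ, 0 < C ∧ 0 < δ ∧ ∀ t : ℝ, ‖f t‖ ≤ C * Real.exp (-δ * |t|) := by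
  obtain ⟨K, hK⟩ := hf_bdd
  obtain ⟨Cp, δp, hCp, hδp, hplus⟩ :=
    halfline A Aplus hA_plus hplus_sa hplus_inv f hf_sol K hK
  set A' : ℝ → E →L[ℝ] E := fun t => -(A (-t)) with hA'
  set g : ℝ → E := fun t => f (-t) with hg
  have hg_sol : ∀ t : ℝ, HasDerivAt g (-(A' t (g t))) t := by
    intro t
    have h1 := (hf_sol (-t)).scomp t (hasDerivAt_neg t)
    simpa [hA', hg, Function.comp_def] using h1
  have hA'_tend : Filter.Tendsto A' Filter.atTop (nhds (-Aminus)) := by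
    have h1 : Filter.Tendsto (fun t : ℝ => -t) Filter.atTop Filter.atBot :=
      tendsto_neg_atTop_atBot
    exact (hA_minus.comp h1).neg
  have hsa' : ∀ x y : E, ⟪(-Aminus) x, y⟫ = ⟪x, (-Aminus) y⟫ := by
    intro x y
    simp only [ContinuousLinearMap.neg_apply, inner_neg_left, inner_neg_right]
    rw [hminus_sa]
  have hinv' : Function.Bijective (-Aminus : E →L[ℝ] E) := by
    constructor
    · intro x y hxy
      apply hminus_inv.1
      have h2 : -(Aminus x) = -(Aminus y) := by
        simpa using hxy
      exact neg_injective h2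
    · intro y
      obtain ⟨x, hx⟩ := hminus_inv.2 (-y)
      exact ⟨x, by simp [hx]⟩
  obtain ⟨Cm, δm, hCm, hδm, hminus⟩ :=
    halfline A' (-Aminus) hA'_tend hsa' hinv' g hg_sol K (fun t => hK (-t))
  refine ⟨max Cp Cm, min δp δm, lt_max_of_lt_left hCp, lt_min hδp hδm, ?_⟩
  intro t
  rcases le_total 0 t with h | h
  · rw [abs_of_nonneg h]
    calc ‖f t‖ ≤ Cp * Real.exp (-δp * t) := hplus t h
      _ ≤ max Cp Cm * Real.exp (-(min δp δm) * t) := by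
        apply mul_le_mul (le_max_left _ _) (Real.exp_le_exp.2 ?_) (Real.exp_pos _).le
          (le_trans hCp.le (le_max_left _ _))
        nlinarith [min_le_left δp δm]
  · rw [abs_of_nonpos h]
    have h0 : 0 ≤ -t := neg_nonneg.2 h
    have hgt := hminus (-t) h0
    simp only [hg, neg_neg] at hgt
    calc ‖f t‖ ≤ Cm * Real.exp (-δm * -t) := hgt
      _ ≤ max Cp Cm * Real.exp (-(min δp δm) * -t) := by
        apply mul_le_mul (le_max_right _ _) (Real.exp_le_exp.2 ?_) (Real.exp_pos _).le
          (le_trans hCp.le (le_max_left _ _))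
        nlinarith [min_le_right δp δm]
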